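/- Let (X_1,Y_1),...,(X_n,Y_n) be i.i.d. copies of (X,Y) from the true model, and let Λ = ((λ_b),(f_b)) be a mixing measure such that P(X ∈ D_b(Λ)) = 1/K for every b. Define the majority-vote gap Δ = min_b [ P(Y=b | X ∈ D_b(Λ)) − max_{j≠b} P(Y=j | X ∈ D_b(Λ)) ] and suppose Δ > 0. Let δ ∈ (0,1). If n ≥ 4K·( (9/(2Δ²))·log(4K²/δ) + log(2K/δ) ), then with probability at least 1 − δ, every decision region D_b(Λ) contains at least one sample and for every b the label b is the unique majority label among {Y_i : X_i ∈ D_b(Λ)} (that is, the majority-vote estimator π̂_MV equals the identity). In particular, Θ(K log K) labeled samples suffice to recover the true permutation with high probability. -/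

import Mathlib

set_option maxHeartbeats 2000000

open MeasureTheory ProbabilityTheory
open scoped Classical

lemma exp_quad_bound {x : ℝ} (h : |x| ≤ 1) :
    Real.exp x ≤ 1 + x + (3/4) * x ^ 2 := by
  have hb := Real.exp_bound h (by norm_num : 0 < 2)
  have hsum : ∑ i ∈ Finset.range 2, x ^ i / (Nat.factorial i : ℝ) = 1 + x := by
    simp [Finset.sum_range_succ, Nat.factorial]
  rw [hsum] at hb
  have h2 : |x| ^ 2 = x ^ 2 := sq_abs x
  have : Real.exp x - (1 + x) ≤ |x| ^ 2 * ((2 + 1 : ℕ) / ((Nat.factorial 2 : ℝ) * 2)) :=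
    (abs_le.1 hb).2
  rw [h2] at this
  norm_num [Nat.factorial] at this
  nlinarith [sq_nonneg x]

lemma mgf_ind_diff_fun {Ω : Type*} (A B : Set Ω) (hAB : A ∩ B = ∅) (t : ℝ) :
    (fun ω => Real.exp (t * (A.indicator (fun _ => (1:ℝ)) ω - B.indicator (fun _ => (1:ℝ)) ω)))
      = fun ω => 1 + (Real.exp t - 1) * A.indicator (fun _ => (1:ℝ)) ω
          + (Real.exp (-t) - 1) * B.indicator (fun _ => (1:ℝ)) ω := by
  funext ω
  by_cases hA : ω ∈ A
  · have hB : ω ∉ B := by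
      intro hB; exact absurd (Set.mem_inter hA hB) (by simp [hAB])
    simp [hA, hB, Set.indicator_of_mem, Set.indicator_of_notMem]
  · by_cases hB : ω ∈ B
    · simp [hA, hB, Set.indicator_of_mem, Set.indicator_of_notMem]
    · simp [hA, hB, Set.indicator_of_notMem]

lemma int_ind_diff {Ω : Type*} [MeasurableSpace Ω] (P : Measure Ω) [IsProbabilityMeasure P]
    (A B : Set Ω) (hA : MeasurableSet A) (hB : MeasurableSet B) (hAB : A ∩ B = ∅) (t : ℝ) :
    Integrable (fun ω =>
      Real.exp (t * (A.indicator (fun _ => (1:ℝ)) ω - B.indicator (fun _ => (1:ℝ)) ω))) P := by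
  rw [mgf_ind_diff_fun A B hAB t]
  exact ((integrable_const (1:ℝ)).add
      (((integrable_const (1:ℝ)).indicator hA).const_mul _)).add
    (((integrable_const (1:ℝ)).indicator hB).const_mul _)

lemma mgf_ind_diff {Ω : Type*} [MeasurableSpace Ω] (P : Measure Ω) [IsProbabilityMeasure P]
    (A B : Set Ω) (hA : MeasurableSet A) (hB : MeasurableSet B) (hAB : A ∩ B = ∅) (t : ℝ) :
    mgf (fun ω => A.indicator (fun _ => (1:ℝ)) ω - B.indicator (fun _ => (1:ℝ)) ω) P t
      = 1 + (Real.exp t - 1) * (P A).toReal + (Real.exp (-t) - 1) * (P B).toReal := by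
  rw [mgf, mgf_ind_diff_fun A B hAB t]
  have h1a : Integrable (fun ω => (Real.exp t - 1) * A.indicator (fun _ => (1:ℝ)) ω) P :=
    ((integrable_const (1:ℝ)).indicator hA).const_mul _
  have h1 : Integrable (fun ω => 1 + (Real.exp t - 1) * A.indicator (fun _ => (1:ℝ)) ω) P :=
    (integrable_const (1:ℝ)).add h1a
  have h2 : Integrable (fun ω => (Real.exp (-t) - 1) * B.indicator (fun _ => (1:ℝ)) ω) P :=
    ((integrable_const (1:ℝ)).indicator hB).const_mul _
  rw [integral_add h1 h2, integral_add (integrable_const (1:ℝ)) h1a,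
    MeasureTheory.integral_const_mul, MeasureTheory.integral_const_mul,
    MeasureTheory.integral_indicator_const _ hA, MeasureTheory.integral_indicator_const _ hB]
  simp [Measure.real]

lemma chernoff_bound {Ω : Type*} [MeasurableSpace Ω] {P : Measure Ω} [IsProbabilityMeasure P]
    {n : ℕ} (Z : Fin n → Ω → ℝ) (hmeas : ∀ i, Measurable (Z i))
    (hindep : iIndepFun Z P)
    {t ρ : ℝ} (ht : 0 ≤ t)
    (hint : ∀ i, Integrable (fun ω => Real.exp (t * Z i ω)) P)
    (hbound : ∀ i, mgf (Z i) P t ≤ ρ) :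
    (P {ω | 0 ≤ ∑ i, Z i ω}).toReal ≤ ρ ^ n := by
  have hS : Integrable (fun ω => Real.exp (t * (∑ i, Z i) ω)) P :=
    hindep.integrable_exp_mul_sum hmeas (fun i _ => hint i)
  have h := measure_ge_le_exp_mul_mgf (X := ∑ i, Z i) (μ := P) 0 ht hS
  rw [hindep.mgf_sum hmeas] at h
  have hset : {ω | (0:ℝ) ≤ ∑ i, Z i ω} = {ω | (0:ℝ) ≤ (∑ i, Z i) ω} := by
    ext ω; simp [Finset.sum_apply]
  rw [hset]
  calc (P {ω | (0:ℝ) ≤ (∑ i, Z i) ω}).toReal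
      ≤ Real.exp (-t * 0) * ∏ i, mgf (Z i) P t := h
    _ = ∏ i, mgf (Z i) P t := by simp
    _ ≤ ∏ _i : Fin n, ρ := Finset.prod_le_prod (fun i _ => mgf_nonneg) (fun i _ => hbound i)
    _ = ρ ^ n := by simp

theorem majority_vote_sample_complexity
    {Ω : Type*} [MeasurableSpace Ω] (P : Measure Ω) [IsProbabilityMeasure P]
    (d K n : ℕ) (hK : 2 ≤ K) (hn : 0 < n)
    -- true weights and class-conditional densities
    (lamstar : Fin K → ℝ) (fstar : Fin K → (Fin d → ℝ) → ℝ)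
    (hlamstar_pos : ∀ k, 0 < lamstar k) (hlamstar_sum : ∑ k, lamstar k = 1)
    (hfstar_meas : ∀ k, Measurable (fstar k))
    (hfstar_nonneg : ∀ k x, 0 ≤ fstar k x)
    (hfstar_int : ∀ k, ∫ x, fstar k x = 1)
    -- i.i.d. labeled pairs from the true model
    (X : Fin n → Ω → (Fin d → ℝ)) (Y : Fin n → Ω → Fin K)
    (hX_meas : ∀ i, Measurable (X i)) (hY_meas : ∀ i, Measurable (Y i))
    (hindep : iIndepFun (fun i ω => (X i ω, Y i ω)) P)
    (hY_law : ∀ i k, P {ω | Y i ω = k} = ENNReal.ofReal (lamstar k))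
    (hcond_law : ∀ i k, Measure.map (X i) (P[|{ω | Y i ω = k}])
      = volume.withDensity (fun x => ENNReal.ofReal (fstar k x)))
    -- the mixing measure Λ and its decision regions, each of probability 1/K
    (lam : Fin K → ℝ) (f : Fin K → (Fin d → ℝ) → ℝ)
    (hlam_pos : ∀ b, 0 < lam b) (hlam_sum : ∑ b, lam b = 1)
    (hf_meas : ∀ b, Measurable (f b))
    (hf_nonneg : ∀ b x, 0 ≤ f b x) (hf_int : ∀ b, ∫ x, f b x = 1)
    (D : Fin K → Set (Fin d → ℝ))
    (hD : ∀ b, D b = {x | ∀ j, j ≠ b → lam j * f j x < lam b * f b x})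
    (hD_prob : ∀ b, P {ω | X ⟨0, hn⟩ ω ∈ D b} = (K : ENNReal)⁻¹)
    -- the majority-vote gap Δ > 0
    (Δ : ℝ)
    (hΔ : Δ = ⨅ b : Fin K,
      ((P[|{ω | X ⟨0, hn⟩ ω ∈ D b}] {ω | Y ⟨0, hn⟩ ω = b}).toReal
        - ⨆ j : {j : Fin K // j ≠ b},
            (P[|{ω | X ⟨0, hn⟩ ω ∈ D b}] {ω | Y ⟨0, hn⟩ ω = j.1}).toReal))
    (hΔpos : 0 < Δ)
    -- sample size requirement
    (δ : ℝ) (hδ : δ ∈ Set.Ioo (0 : ℝ) 1)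
    (hsize : 4 * (K : ℝ) * ((9 / (2 * Δ ^ 2)) * Real.log (4 * (K : ℝ) ^ 2 / δ)
        + Real.log (2 * (K : ℝ) / δ)) ≤ (n : ℝ)) :
    1 - δ ≤ (P {ω |
        (∀ b : Fin K, 1 ≤ (Finset.univ.filter (fun i => X i ω ∈ D b)).card) ∧
        (∀ b j : Fin K, j ≠ b →
          (Finset.univ.filter (fun i => X i ω ∈ D b ∧ Y i ω = j)).card
            < (Finset.univ.filter (fun i => X i ω ∈ D b ∧ Y i ω = b)).card)}).toReal := by
  obtain ⟨hδ0, hδ1⟩ := hδ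
  set i0 : Fin n := ⟨0, hn⟩ with hi0
  have hKn : 0 < K := lt_of_lt_of_le two_pos hK
  have hK0 : (0:ℝ) < K := by exact_mod_cast hKn
  have hKR2 : (2:ℝ) ≤ K := by exact_mod_cast hK
  -- measurability of decision regions
  have hD_meas : ∀ b, MeasurableSet (D b) := by
    intro b
    rw [hD b]
    have h : {x | ∀ j, j ≠ b → lam j * f j x < lam b * f b x}
        = ⋂ j, ⋂ (_ : j ≠ b), {x | lam j * f j x < lam b * f b x} := by
      ext x; simp [Set.mem_iInter]
    rw [h]
    exact MeasurableSet.iInter fun j => MeasurableSet.iInter fun _ =>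
      measurableSet_lt ((hf_meas j).const_mul _) ((hf_meas b).const_mul _)
  have hXb_meas : ∀ i b, MeasurableSet {ω | X i ω ∈ D b} := fun i b => (hX_meas i) (hD_meas b)
  have hA_meas : ∀ i b j, MeasurableSet {ω | X i ω ∈ D b ∧ Y i ω = j} := by
    intro i b j
    exact (hXb_meas i b).inter ((hY_meas i) (measurableSet_singleton j))
  -- identical one-sample law
  have hA_eq : ∀ i b j, P {ω | X i ω ∈ D b ∧ Y i ω = j}
      = ENNReal.ofReal (lamstar j)
        * (volume.withDensity fun x => ENNReal.ofReal (fstar j x)) (D b) := by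
    intro i b j
    have hYm : MeasurableSet {ω | Y i ω = j} := (hY_meas i) (measurableSet_singleton j)
    have h1 : (P[|{ω | Y i ω = j}]) (X i ⁻¹' D b)
        = (volume.withDensity fun x => ENNReal.ofReal (fstar j x)) (D b) := by
      rw [← hcond_law i j, Measure.map_apply (hX_meas i) (hD_meas b)]
    rw [ProbabilityTheory.cond_apply hYm] at h1
    have hs0 : P {ω | Y i ω = j} ≠ 0 := by
      rw [hY_law i j]
      simp only [ne_eq, ENNReal.ofReal_eq_zero, not_le]
      exact hlamstar_pos j
    have hstp : P {ω | Y i ω = j} ≠ ⊤ := measure_ne_top _ _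
    have hset : {ω | X i ω ∈ D b ∧ Y i ω = j} = {ω | Y i ω = j} ∩ X i ⁻¹' D b := by
      ext ω; exact ⟨fun h => ⟨h.2, h.1⟩, fun h => ⟨h.2, h.1⟩⟩
    rw [hset, ← hY_law i j, ← h1, ← mul_assoc, ENNReal.mul_inv_cancel hs0 hstp, one_mul]
  have key : ∀ i b j, P {ω | X i ω ∈ D b ∧ Y i ω = j}
      = P {ω | X i0 ω ∈ D b ∧ Y i0 ω = j} := by
    intro i b j; rw [hA_eq i b j, hA_eq i0 b j]
  set q : Fin K → Fin K → ℝ :=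
    fun b j => (P {ω | X i0 ω ∈ D b ∧ Y i0 ω = j}).toReal with hqdef
  have hPA : ∀ i b j, (P {ω | X i ω ∈ D b ∧ Y i ω = j}).toReal = q b j := by
    intro i b j; rw [key i b j]
  have hq0 : ∀ b j, 0 ≤ q b j := fun b j => ENNReal.toReal_nonneg
  -- partition of the region event by labels
  have hpart : ∀ i b, P {ω | X i ω ∈ D b}
      = ∑ j, P {ω | X i ω ∈ D b ∧ Y i ω = j} := by
    intro i b
    have hU : {ω | X i ω ∈ D b} = ⋃ j, {ω | X i ω ∈ D b ∧ Y i ω = j} := by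
      ext ω
      rw [Set.mem_iUnion]
      simp only [Set.mem_setOf_eq]
      constructor
      · intro h
        exact ⟨Y i ω, h, rfl⟩
      · rintro ⟨j, hj, _⟩
        exact hj
    rw [hU, measure_iUnion ?_ (fun j => hA_meas i b j), tsum_fintype]
    intro j k hjk
    rw [Function.onFun, Set.disjoint_left]
    intro ω hω1 hω2
    simp only [Set.mem_setOf_eq] at hω1 hω2
    exact hjk (hω1.2.symm.trans hω2.2)
  have hXDb : ∀ i b, P {ω | X i ω ∈ D b} = (K:ENNReal)⁻¹ := by
    intro i b
    rw [hpart i b]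
    calc ∑ j, P {ω | X i ω ∈ D b ∧ Y i ω = j}
        = ∑ j, P {ω | X i0 ω ∈ D b ∧ Y i0 ω = j} :=
          Finset.sum_congr rfl (fun j _ => key i b j)
      _ = P {ω | X i0 ω ∈ D b} := (hpart i0 b).symm
      _ = (K:ENNReal)⁻¹ := hD_prob b
  have hXDbR : ∀ i b, (P {ω | X i ω ∈ D b}).toReal = (K:ℝ)⁻¹ := by
    intro i b
    rw [hXDb i b, ENNReal.toReal_inv, ENNReal.toReal_natCast]
  have hqsum : ∀ b, ∑ j, q b j = (K:ℝ)⁻¹ := by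
    intro b
    have h1 := hpart i0 b
    rw [hD_prob b] at h1
    have h2 : ((K:ENNReal)⁻¹).toReal
        = (∑ j, P {ω | X i0 ω ∈ D b ∧ Y i0 ω = j}).toReal := by rw [← h1]
    rw [ENNReal.toReal_sum (fun j _ => measure_ne_top _ _), ENNReal.toReal_inv,
      ENNReal.toReal_natCast] at h2
    rw [hqdef]
    exact h2.symm
  have hqpair : ∀ b j, j ≠ b → q b b + q b j ≤ (K:ℝ)⁻¹ := by
    intro b j hj
    have hle := Finset.sum_le_sum_of_subset_of_nonneg
      (Finset.subset_univ ({b, j} : Finset (Fin K))) (fun k _ _ => hq0 b k)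
    rw [Finset.sum_pair (Ne.symm hj)] at hle
    rw [← hqsum b]; exact hle
  -- conditional probabilities
  have hcondP : ∀ b j, (P[|{ω | X i0 ω ∈ D b}] {ω | Y i0 ω = j}).toReal = K * q b j := by
    intro b j
    rw [ProbabilityTheory.cond_apply (hXb_meas i0 b)]
    have hset : {ω | X i0 ω ∈ D b} ∩ {ω | Y i0 ω = j}
        = {ω | X i0 ω ∈ D b ∧ Y i0 ω = j} := rfl
    rw [hset, hD_prob b, inv_inv, ENNReal.toReal_mul, ENNReal.toReal_natCast]
  -- the gap
  have hgap : ∀ b j, j ≠ b → Δ / K ≤ q b b - q b j := by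
    intro b j hj
    have h1 : Δ ≤ (P[|{ω | X i0 ω ∈ D b}] {ω | Y i0 ω = b}).toReal
        - ⨆ j' : {j' : Fin K // j' ≠ b},
            (P[|{ω | X i0 ω ∈ D b}] {ω | Y i0 ω = j'.1}).toReal := by
      rw [hΔ]
      exact ciInf_le ((Set.finite_range _).bddBelow) b
    have h2 : (P[|{ω | X i0 ω ∈ D b}] {ω | Y i0 ω = j}).toReal
        ≤ ⨆ j' : {j' : Fin K // j' ≠ b},
            (P[|{ω | X i0 ω ∈ D b}] {ω | Y i0 ω = j'.1}).toReal :=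
      le_ciSup (f := fun j' : {j' : Fin K // j' ≠ b} =>
        (P[|{ω | X i0 ω ∈ D b}] {ω | Y i0 ω = j'.1}).toReal)
        ((Set.finite_range _).bddAbove) ⟨j, hj⟩
    have h3 : Δ ≤ (K:ℝ) * q b b - (K:ℝ) * q b j := by
      rw [← hcondP b j, ← hcondP b b]; linarith
    rw [div_le_iff₀ hK0]
    nlinarith [h3]
  have hΔ1 : Δ ≤ 1 := by
    have hlt1 : (1:ℕ) < K := lt_of_lt_of_le one_lt_two hK
    have hne : (⟨1, hlt1⟩ : Fin K) ≠ ⟨0, hKn⟩ :=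
      Fin.ne_of_val_ne (by norm_num)
    have hg := hgap ⟨0, hKn⟩ ⟨1, hlt1⟩ hne
    have hp := hqpair ⟨0, hKn⟩ ⟨1, hlt1⟩ hne
    have h2 := hq0 (⟨0, hKn⟩ : Fin K) (⟨1, hlt1⟩ : Fin K)
    have h4 : Δ / K ≤ (K:ℝ)⁻¹ := by linarith
    have h5 : Δ / K * K ≤ (K:ℝ)⁻¹ * K := mul_le_mul_of_nonneg_right h4 hK0.le
    rw [div_mul_cancel₀ _ (ne_of_gt hK0), inv_mul_cancel₀ (ne_of_gt hK0)] at h5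
    exact h5
  -- logs
  set L1 : ℝ := Real.log (4 * (K:ℝ)^2 / δ) with hL1def
  set L2 : ℝ := Real.log (2 * (K:ℝ) / δ) with hL2def
  have hL1pos : 0 ≤ L1 := by
    rw [hL1def]
    apply Real.log_nonneg
    rw [le_div_iff₀ hδ0]
    nlinarith
  have hL2pos : 0 ≤ L2 := by
    rw [hL2def]
    apply Real.log_nonneg
    rw [le_div_iff₀ hδ0]
    nlinarith
  have hquad : (0:ℝ) < Δ^2 := by positivity
  have hfirst_nonneg : (0:ℝ) ≤ 4 * (K:ℝ) * ((9 / (2 * Δ ^ 2)) * L1) := by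
    have h9 : (0:ℝ) ≤ 9 / (2 * Δ ^ 2) := by positivity
    have := mul_nonneg h9 hL1pos
    nlinarith
  have hn1 : 18 * (K:ℝ) * L1 ≤ (n:ℝ) * Δ^2 := by
    have h4 : 4 * (K:ℝ) * ((9/(2*Δ^2)) * L1) ≤ (n:ℝ) := by
      have h2nd : (0:ℝ) ≤ 4 * (K:ℝ) * L2 := by positivity
      nlinarith [hsize]
    calc 18 * (K:ℝ) * L1 = (4 * (K:ℝ) * ((9/(2*Δ^2)) * L1)) * Δ^2 := by
          field_simp
          ring
      _ ≤ (n:ℝ) * Δ^2 := mul_le_mul_of_nonneg_right h4 hquad.le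
  have hn2 : 4 * (K:ℝ) * L2 ≤ (n:ℝ) := by nlinarith [hsize, hfirst_nonneg]
  -- Chernoff parameters
  set t : ℝ := Δ / 2 with htdef
  have ht0 : 0 ≤ t := by rw [htdef]; linarith
  have ht1 : t ≤ 1/2 := by rw [htdef]; linarith
  have habs : |t| ≤ 1 := abs_le.2 ⟨by linarith, by linarith⟩
  have e1 : Real.exp t ≤ 1 + t + 3/4*t^2 := by
    have := exp_quad_bound habs
    linarith
  have e2 : Real.exp (-t) ≤ 1 - t + 3/4*t^2 := by
    have habs' : |(-t)| ≤ 1 := by rwa [abs_neg]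
    have := exp_quad_bound habs'
    rw [neg_sq] at this
    linarith
  set ρ : ℝ := Real.exp (-(5/16 * (Δ^2 / K))) with hρdef
  set ρ0 : ℝ := Real.exp (-(1/(2*(K:ℝ)))) with hρ0def
  -- bad events
  set Ebad : Fin K → Fin K → Set Ω := fun b j =>
    {ω | 0 ≤ ∑ i, ({ω' | X i ω' ∈ D b ∧ Y i ω' = j}.indicator (fun _ => (1:ℝ)) ω
      - {ω' | X i ω' ∈ D b ∧ Y i ω' = b}.indicator (fun _ => (1:ℝ)) ω)} with hEbaddef
  set E0bad : Fin K → Set Ω := fun b =>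
    {ω | 0 ≤ ∑ i, ({ω' | X i ω' ∈ (∅ : Set (Fin d → ℝ))}.indicator (fun _ => (1:ℝ)) ω
      - {ω' | X i ω' ∈ D b}.indicator (fun _ => (1:ℝ)) ω)} with hE0baddef
  -- Chernoff bound for label pairs
  have hEbound : ∀ b j, j ≠ b → (P (Ebad b j)).toReal ≤ δ / (4*(K:ℝ)^2) := by
    intro b j hj
    have hdisj : ∀ i : Fin n,
        {ω | X i ω ∈ D b ∧ Y i ω = j} ∩ {ω | X i ω ∈ D b ∧ Y i ω = b} = ∅ := by
      intro i
      ext ω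
      simp only [Set.mem_inter_iff, Set.mem_setOf_eq, Set.mem_empty_iff_false, iff_false]
      rintro ⟨⟨_, h1⟩, _, h2⟩
      exact hj (h1.symm.trans h2)
    have hZmeas : ∀ i : Fin n, Measurable (fun ω =>
        {ω' | X i ω' ∈ D b ∧ Y i ω' = j}.indicator (fun _ => (1:ℝ)) ω
          - {ω' | X i ω' ∈ D b ∧ Y i ω' = b}.indicator (fun _ => (1:ℝ)) ω) := by
      intro i
      exact (measurable_const.indicator (hA_meas i b j)).sub
        (measurable_const.indicator (hA_meas i b b))
    have hgmeas : Measurable (fun p : (Fin d → ℝ) × Fin K =>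
        {p' : (Fin d → ℝ) × Fin K | p'.1 ∈ D b ∧ p'.2 = j}.indicator (fun _ => (1:ℝ)) p
          - {p' : (Fin d → ℝ) × Fin K | p'.1 ∈ D b ∧ p'.2 = b}.indicator (fun _ => (1:ℝ)) p) := by
      have hs1 : MeasurableSet {p' : (Fin d → ℝ) × Fin K | p'.1 ∈ D b ∧ p'.2 = j} :=
        ((hD_meas b).preimage measurable_fst).inter
          ((measurableSet_singleton j).preimage measurable_snd)
      have hs2 : MeasurableSet {p' : (Fin d → ℝ) × Fin K | p'.1 ∈ D b ∧ p'.2 = b} :=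
        ((hD_meas b).preimage measurable_fst).inter
          ((measurableSet_singleton b).preimage measurable_snd)
      exact (measurable_const.indicator hs1).sub (measurable_const.indicator hs2)
    have hZindep : iIndepFun (fun (i : Fin n) (ω : Ω) =>
        {ω' | X i ω' ∈ D b ∧ Y i ω' = j}.indicator (fun _ => (1:ℝ)) ω
          - {ω' | X i ω' ∈ D b ∧ Y i ω' = b}.indicator (fun _ => (1:ℝ)) ω) P := by
      have hcomp := hindep.comp (fun _ => (fun p : (Fin d → ℝ) × Fin K =>
        {p' : (Fin d → ℝ) × Fin K | p'.1 ∈ D b ∧ p'.2 = j}.indicator (fun _ => (1:ℝ)) p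
          - {p' : (Fin d → ℝ) × Fin K | p'.1 ∈ D b ∧ p'.2 = b}.indicator (fun _ => (1:ℝ)) p))
        (fun _ => hgmeas)
      exact hcomp
    have hint : ∀ i : Fin n, Integrable (fun ω => Real.exp (t *
        ({ω' | X i ω' ∈ D b ∧ Y i ω' = j}.indicator (fun _ => (1:ℝ)) ω
          - {ω' | X i ω' ∈ D b ∧ Y i ω' = b}.indicator (fun _ => (1:ℝ)) ω))) P := by
      intro i
      exact int_ind_diff P {ω' | X i ω' ∈ D b ∧ Y i ω' = j} {ω' | X i ω' ∈ D b ∧ Y i ω' = b}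
        (hA_meas i b j) (hA_meas i b b) (hdisj i) t
    have hmgf : ∀ i : Fin n, mgf (fun ω =>
        {ω' | X i ω' ∈ D b ∧ Y i ω' = j}.indicator (fun _ => (1:ℝ)) ω
          - {ω' | X i ω' ∈ D b ∧ Y i ω' = b}.indicator (fun _ => (1:ℝ)) ω) P t ≤ ρ := by
      intro i
      rw [mgf_ind_diff P {ω' | X i ω' ∈ D b ∧ Y i ω' = j} {ω' | X i ω' ∈ D b ∧ Y i ω' = b}
        (hA_meas i b j) (hA_meas i b b) (hdisj i) t, hPA i b j, hPA i b b]
      have hg := hgap b j hj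
      have hp := hqpair b j hj
      have h0j := hq0 b j
      have h0b := hq0 b b
      have s1 : (Real.exp t - 1) * q b j ≤ (t + 3/4*t^2) * q b j :=
        mul_le_mul_of_nonneg_right (by linarith) h0j
      have s2 : (Real.exp (-t) - 1) * q b b ≤ (-t + 3/4*t^2) * q b b :=
        mul_le_mul_of_nonneg_right (by linarith) h0b
      have s3 : t * (Δ/K) ≤ t * (q b b - q b j) := mul_le_mul_of_nonneg_left hg ht0
      have s4 : 3/4*t^2*(q b j + q b b) ≤ 3/4*t^2*(K:ℝ)⁻¹ :=
        mul_le_mul_of_nonneg_left (by linarith) (by positivity)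
      have step : 1 + (Real.exp t - 1) * q b j + (Real.exp (-t) - 1) * q b b
          ≤ 1 - t * (Δ/K) + 3/4 * t^2 * (K:ℝ)⁻¹ := by nlinarith [s1, s2, s3, s4]
      have heq : 1 - t * (Δ/K) + 3/4 * t^2 * (K:ℝ)⁻¹ = 1 - 5/16 * (Δ^2 / K) := by
        rw [htdef]
        field_simp
        ring
      have hexp : 1 - 5/16 * (Δ^2/K) ≤ ρ := by
        rw [hρdef]
        have := Real.add_one_le_exp (-(5/16 * (Δ^2/K)))
        linarith
      linarith [step, heq.le, heq.ge]
    have hch := chernoff_bound (fun (i : Fin n) (ω : Ω) =>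
        {ω' | X i ω' ∈ D b ∧ Y i ω' = j}.indicator (fun _ => (1:ℝ)) ω
          - {ω' | X i ω' ∈ D b ∧ Y i ω' = b}.indicator (fun _ => (1:ℝ)) ω)
      hZmeas hZindep ht0 hint hmgf
    have hρn : ρ ^ n ≤ δ / (4*(K:ℝ)^2) := by
      rw [hρdef, ← Real.exp_nat_mul]
      have hkey : L1 ≤ (n:ℝ) * (5/16 * (Δ^2 / K)) := by
        have h16 : 16 * (K:ℝ) * L1 ≤ 5 * ((n:ℝ) * Δ^2) := by nlinarith [hn1, hL1pos, hK0]
        rw [show (n:ℝ) * (5/16 * (Δ^2/K)) = (5 * ((n:ℝ) * Δ^2)) / (16 * K) by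
          field_simp]
        rw [le_div_iff₀ (by positivity)]
        linarith
      have hmono : (n:ℝ) * -(5/16 * (Δ^2/K)) ≤ -L1 := by
        have heq2 : (n:ℝ) * -(5/16 * (Δ^2/K)) = -((n:ℝ) * (5/16 * (Δ^2/K))) := by ring
        rw [heq2]
        linarith
      calc Real.exp ((n:ℝ) * -(5/16 * (Δ^2/K))) ≤ Real.exp (-L1) := Real.exp_le_exp.2 hmono
        _ = δ / (4*(K:ℝ)^2) := by
            rw [hL1def, Real.exp_neg, Real.exp_log (by positivity), inv_div]
    exact le_trans hch hρn
  -- Chernoff bound for empty regions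
  have hE0bound : ∀ b, (P (E0bad b)).toReal ≤ δ / (2*(K:ℝ)) := by
    intro b
    have hdisj : ∀ i : Fin n,
        {ω | X i ω ∈ (∅ : Set (Fin d → ℝ))} ∩ {ω | X i ω ∈ D b} = ∅ := by
      intro i; ext ω; simp
    have hemp_meas : ∀ i : Fin n, MeasurableSet {ω | X i ω ∈ (∅ : Set (Fin d → ℝ))} :=
      fun i => (hX_meas i) MeasurableSet.empty
    have hWmeas : ∀ i : Fin n, Measurable (fun ω =>
        {ω' | X i ω' ∈ (∅ : Set (Fin d → ℝ))}.indicator (fun _ => (1:ℝ)) ω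
          - {ω' | X i ω' ∈ D b}.indicator (fun _ => (1:ℝ)) ω) := by
      intro i
      exact (measurable_const.indicator (hemp_meas i)).sub
        (measurable_const.indicator (hXb_meas i b))
    have hgmeas : Measurable (fun p : (Fin d → ℝ) × Fin K =>
        {p' : (Fin d → ℝ) × Fin K | p'.1 ∈ (∅ : Set (Fin d → ℝ))}.indicator (fun _ => (1:ℝ)) p
          - {p' : (Fin d → ℝ) × Fin K | p'.1 ∈ D b}.indicator (fun _ => (1:ℝ)) p) := by
      exact (measurable_const.indicator (MeasurableSet.empty.preimage measurable_fst)).sub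
        (measurable_const.indicator ((hD_meas b).preimage measurable_fst))
    have hWindep : iIndepFun (fun (i : Fin n) (ω : Ω) =>
        {ω' | X i ω' ∈ (∅ : Set (Fin d → ℝ))}.indicator (fun _ => (1:ℝ)) ω
          - {ω' | X i ω' ∈ D b}.indicator (fun _ => (1:ℝ)) ω) P := by
      have hcomp := hindep.comp (fun _ => (fun p : (Fin d → ℝ) × Fin K =>
        {p' : (Fin d → ℝ) × Fin K | p'.1 ∈ (∅ : Set (Fin d → ℝ))}.indicator (fun _ => (1:ℝ)) p
          - {p' : (Fin d → ℝ) × Fin K | p'.1 ∈ D b}.indicator (fun _ => (1:ℝ)) p))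
        (fun _ => hgmeas)
      exact hcomp
    have hint : ∀ i : Fin n, Integrable (fun ω => Real.exp ((1:ℝ) *
        ({ω' | X i ω' ∈ (∅ : Set (Fin d → ℝ))}.indicator (fun _ => (1:ℝ)) ω
          - {ω' | X i ω' ∈ D b}.indicator (fun _ => (1:ℝ)) ω))) P := by
      intro i
      exact int_ind_diff P {ω' | X i ω' ∈ (∅ : Set (Fin d → ℝ))} {ω' | X i ω' ∈ D b}
        (hemp_meas i) (hXb_meas i b) (hdisj i) 1
    have hPemp : ∀ i : Fin n, (P {ω | X i ω ∈ (∅ : Set (Fin d → ℝ))}).toReal = 0 := by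
      intro i
      have h0 : {ω | X i ω ∈ (∅ : Set (Fin d → ℝ))} = (∅ : Set Ω) := by ext ω; simp
      rw [h0]
      simp
    have hexpinv : Real.exp (-1) ≤ 1/2 := by
      have h2e : (2:ℝ) ≤ Real.exp 1 := by
        have := Real.add_one_le_exp 1
        linarith
      rw [Real.exp_neg]
      rw [show (1:ℝ)/2 = 2⁻¹ by norm_num]
      exact inv_anti₀ two_pos h2e
    have hmgf : ∀ i : Fin n, mgf (fun ω =>
        {ω' | X i ω' ∈ (∅ : Set (Fin d → ℝ))}.indicator (fun _ => (1:ℝ)) ω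
          - {ω' | X i ω' ∈ D b}.indicator (fun _ => (1:ℝ)) ω) P 1 ≤ ρ0 := by
      intro i
      rw [mgf_ind_diff P {ω' | X i ω' ∈ (∅ : Set (Fin d → ℝ))} {ω' | X i ω' ∈ D b}
        (hemp_meas i) (hXb_meas i b) (hdisj i) 1, hPemp i, hXDbR i b]
      have hKinv : (0:ℝ) < (K:ℝ)⁻¹ := by positivity
      have step : 1 + (Real.exp 1 - 1) * 0 + (Real.exp (-1) - 1) * (K:ℝ)⁻¹
          ≤ 1 - 1/2 * (K:ℝ)⁻¹ := by nlinarith [hexpinv, hKinv]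
      have heq : (1:ℝ) - 1/2 * (K:ℝ)⁻¹ = 1 - 1/(2*(K:ℝ)) := by ring
      have hexp : (1:ℝ) - 1/(2*(K:ℝ)) ≤ ρ0 := by
        rw [hρ0def]
        have := Real.add_one_le_exp (-(1/(2*(K:ℝ))))
        linarith
      linarith [step, heq.le, heq.ge]
    have hch := chernoff_bound (fun (i : Fin n) (ω : Ω) =>
        {ω' | X i ω' ∈ (∅ : Set (Fin d → ℝ))}.indicator (fun _ => (1:ℝ)) ω
          - {ω' | X i ω' ∈ D b}.indicator (fun _ => (1:ℝ)) ω)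
      hWmeas hWindep zero_le_one hint hmgf
    have hρ0n : ρ0 ^ n ≤ δ / (2*(K:ℝ)) := by
      rw [hρ0def, ← Real.exp_nat_mul]
      have hkey : L2 ≤ (n:ℝ) * (1/(2*(K:ℝ))) := by
        rw [show (n:ℝ) * (1/(2*(K:ℝ))) = (n:ℝ) / (2*K) by ring]
        rw [le_div_iff₀ (by positivity)]
        nlinarith [hn2, hL2pos]
      have hmono : (n:ℝ) * -(1/(2*(K:ℝ))) ≤ -L2 := by
        have heq2 : (n:ℝ) * -(1/(2*(K:ℝ))) = -((n:ℝ) * (1/(2*(K:ℝ)))) := by ring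
        rw [heq2]
        linarith
      calc Real.exp ((n:ℝ) * -(1/(2*(K:ℝ)))) ≤ Real.exp (-L2) := Real.exp_le_exp.2 hmono
        _ = δ / (2*(K:ℝ)) := by
            rw [hL2def, Real.exp_neg, Real.exp_log (by positivity), inv_div]
    exact le_trans hch hρ0n
  -- the good event
  set G : Set Ω := {ω |
      (∀ b : Fin K, 1 ≤ (Finset.univ.filter (fun i => X i ω ∈ D b)).card) ∧
      (∀ b j : Fin K, j ≠ b →
        (Finset.univ.filter (fun i => X i ω ∈ D b ∧ Y i ω = j)).card
          < (Finset.univ.filter (fun i => X i ω ∈ D b ∧ Y i ω = b)).card)} with hGdef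
  have hcR : ∀ b j : Fin K, Measurable (fun ω =>
      ∑ i, {ω' | X i ω' ∈ D b ∧ Y i ω' = j}.indicator (fun _ => (1:ℝ)) ω) := by
    intro b j
    exact Finset.measurable_sum _
      (fun i _ => measurable_const.indicator (hA_meas i b j))
  have hcR1 : ∀ b : Fin K, Measurable (fun ω =>
      ∑ i, {ω' | X i ω' ∈ D b}.indicator (fun _ => (1:ℝ)) ω) := by
    intro b
    exact Finset.measurable_sum _
      (fun i _ => measurable_const.indicator (hXb_meas i b))
  have hGmeas : MeasurableSet G := by
    have hGeq : G = (⋂ b : Fin K,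
          {ω | (1:ℝ) ≤ ∑ i, {ω' | X i ω' ∈ D b}.indicator (fun _ => (1:ℝ)) ω})
        ∩ ⋂ b : Fin K, ⋂ j : Fin K, ⋂ (_ : j ≠ b),
          {ω | (∑ i, {ω' | X i ω' ∈ D b ∧ Y i ω' = j}.indicator (fun _ => (1:ℝ)) ω)
            < ∑ i, {ω' | X i ω' ∈ D b ∧ Y i ω' = b}.indicator (fun _ => (1:ℝ)) ω} := by
      rw [hGdef]
      ext ω
      simp [Set.mem_setOf_eq, Set.mem_inter_iff, Set.mem_iInter, Set.indicator_apply,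
        Finset.sum_boole, Nat.one_le_cast, Nat.cast_lt]
    rw [hGeq]
    exact (MeasurableSet.iInter fun b =>
        measurableSet_le measurable_const (hcR1 b)).inter
      (MeasurableSet.iInter fun b => MeasurableSet.iInter fun j =>
        MeasurableSet.iInter fun _ => measurableSet_lt (hcR b j) (hcR b b))
  -- complement inclusion
  have hsub : Gᶜ ⊆ (⋃ b, E0bad b) ∪ ⋃ p : Fin K × Fin K,
      (if p.2 = p.1 then (∅ : Set Ω) else Ebad p.1 p.2) := by
    intro ω hω
    have hω' : ¬ ((∀ b : Fin K, 1 ≤ (Finset.univ.filter (fun i => X i ω ∈ D b)).card) ∧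
        (∀ b j : Fin K, j ≠ b →
          (Finset.univ.filter (fun i => X i ω ∈ D b ∧ Y i ω = j)).card
            < (Finset.univ.filter (fun i => X i ω ∈ D b ∧ Y i ω = b)).card)) := hω
    rcases not_and_or.mp hω' with h | h
    · push_neg at h
      obtain ⟨b, hb⟩ := h
      have hcard0 : (Finset.univ.filter (fun i => X i ω ∈ D b)).card = 0 :=
        Nat.lt_one_iff.mp hb
      have hfe : ∀ i : Fin n, X i ω ∉ D b := by
        intro i hmem
        have hmem' : i ∈ Finset.univ.filter (fun i => X i ω ∈ D b) := by
          simp [hmem]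
        rw [Finset.card_eq_zero.mp hcard0] at hmem'
        exact absurd hmem' (Finset.notMem_empty i)
      left
      refine Set.mem_iUnion.2 ⟨b, ?_⟩
      rw [hE0baddef]
      simp only [Set.mem_setOf_eq]
      have hz : ∀ i : Fin n,
          ({ω' | X i ω' ∈ (∅ : Set (Fin d → ℝ))}.indicator (fun _ => (1:ℝ)) ω
            - {ω' | X i ω' ∈ D b}.indicator (fun _ => (1:ℝ)) ω) = 0 := by
        intro i
        rw [Set.indicator_of_notMem (by simp), Set.indicator_of_notMem (by simpa using hfe i)]
        ring
      rw [Finset.sum_congr rfl (fun i _ => hz i)]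
      simp
    · push_neg at h
      obtain ⟨b, j, hj, hle⟩ := h
      right
      refine Set.mem_iUnion.2 ⟨(b, j), ?_⟩
      rw [if_neg hj]
      rw [hEbaddef]
      simp only [Set.mem_setOf_eq]
      have hcast : ∑ i, ({ω' | X i ω' ∈ D b ∧ Y i ω' = j}.indicator (fun _ => (1:ℝ)) ω
          - {ω' | X i ω' ∈ D b ∧ Y i ω' = b}.indicator (fun _ => (1:ℝ)) ω)
          = ((Finset.univ.filter (fun i => X i ω ∈ D b ∧ Y i ω = j)).card : ℝ)
            - ((Finset.univ.filter (fun i => X i ω ∈ D b ∧ Y i ω = b)).card : ℝ) := by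
        rw [Finset.sum_sub_distrib]
        simp [Set.indicator_apply, Set.mem_setOf_eq, Finset.sum_boole]
      rw [hcast]
      have hc := Nat.cast_le (α := ℝ) |>.2 hle
      linarith
  -- measure of the bad event
  have hGc : P Gᶜ ≤ ENNReal.ofReal δ := by
    have h1 : P Gᶜ ≤ P (⋃ b, E0bad b) + P (⋃ p : Fin K × Fin K,
        (if p.2 = p.1 then (∅ : Set Ω) else Ebad p.1 p.2)) :=
      le_trans (measure_mono hsub) (measure_union_le _ _)
    have h2 : P (⋃ b, E0bad b) ≤ ∑ b : Fin K, P (E0bad b) :=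
      measure_iUnion_fintype_le P _
    have h3 : P (⋃ p : Fin K × Fin K, (if p.2 = p.1 then (∅ : Set Ω) else Ebad p.1 p.2))
        ≤ ∑ p : Fin K × Fin K, P (if p.2 = p.1 then (∅ : Set Ω) else Ebad p.1 p.2) :=
      measure_iUnion_fintype_le P _
    have h4 : ∀ b : Fin K, P (E0bad b) ≤ ENNReal.ofReal (δ / (2*(K:ℝ))) := by
      intro b
      exact (ENNReal.le_ofReal_iff_toReal_le (measure_ne_top _ _) (by positivity)).2
        (hE0bound b)
    have h5 : ∀ p : Fin K × Fin K,
        P (if p.2 = p.1 then (∅ : Set Ω) else Ebad p.1 p.2)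
          ≤ ENNReal.ofReal (δ / (4*(K:ℝ)^2)) := by
      intro p
      by_cases hp : p.2 = p.1
      · rw [if_pos hp]
        simp
      · rw [if_neg hp]
        exact (ENNReal.le_ofReal_iff_toReal_le (measure_ne_top _ _) (by positivity)).2
          (hEbound p.1 p.2 hp)
    have h6 : ∑ b : Fin K, P (E0bad b) ≤ ENNReal.ofReal (δ/2) := by
      calc ∑ b : Fin K, P (E0bad b) ≤ ∑ _b : Fin K, ENNReal.ofReal (δ / (2*(K:ℝ))) :=
            Finset.sum_le_sum (fun b _ => h4 b)
        _ = (K : ENNReal) * ENNReal.ofReal (δ / (2*(K:ℝ))) := by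
            rw [Finset.sum_const, Finset.card_univ, Fintype.card_fin, nsmul_eq_mul]
        _ = ENNReal.ofReal ((K:ℝ) * (δ / (2*(K:ℝ)))) := by
            rw [ENNReal.ofReal_mul (by positivity), ENNReal.ofReal_natCast]
        _ = ENNReal.ofReal (δ/2) := by
            congr 1
            field_simp
    have h7 : ∑ p : Fin K × Fin K, P (if p.2 = p.1 then (∅ : Set Ω) else Ebad p.1 p.2)
        ≤ ENNReal.ofReal (δ/4) := by
      calc ∑ p : Fin K × Fin K, P (if p.2 = p.1 then (∅ : Set Ω) else Ebad p.1 p.2)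
          ≤ ∑ _p : Fin K × Fin K, ENNReal.ofReal (δ / (4*(K:ℝ)^2)) :=
            Finset.sum_le_sum (fun p _ => h5 p)
        _ = ((K*K : ℕ) : ENNReal) * ENNReal.ofReal (δ / (4*(K:ℝ)^2)) := by
            rw [Finset.sum_const, Finset.card_univ, nsmul_eq_mul]
            congr 1
            simp [Fintype.card_prod]
        _ = ENNReal.ofReal (((K*K : ℕ) : ℝ) * (δ / (4*(K:ℝ)^2))) := by
            rw [ENNReal.ofReal_mul (by positivity), ENNReal.ofReal_natCast]
        _ = ENNReal.ofReal (δ/4) := by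
            congr 1
            push_cast
            field_simp
    calc P Gᶜ ≤ P (⋃ b, E0bad b) + P (⋃ p : Fin K × Fin K,
          (if p.2 = p.1 then (∅ : Set Ω) else Ebad p.1 p.2)) := h1
      _ ≤ ENNReal.ofReal (δ/2) + ENNReal.ofReal (δ/4) :=
          add_le_add (le_trans h2 h6) (le_trans h3 h7)
      _ = ENNReal.ofReal (δ/2 + δ/4) := (ENNReal.ofReal_add (by positivity) (by positivity)).symm
      _ ≤ ENNReal.ofReal δ := ENNReal.ofReal_le_ofReal (by linarith)
  -- conclude
  have hGcle : (P Gᶜ).toReal ≤ δ := ENNReal.toReal_le_of_le_ofReal hδ0.le hGc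
  have hcompl : (P G).toReal + (P Gᶜ).toReal = 1 := by
    have h := measure_add_measure_compl (μ := P) hGmeas
    rw [measure_univ] at h
    have h' := congrArg ENNReal.toReal h
    rw [ENNReal.toReal_add (measure_ne_top _ _) (measure_ne_top _ _)] at h'
    simpa using h'
  linarith
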